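/- There exists a function f : [0,1] → [0,1] which is connectedness-preserving but not continuum-preserving. -/

import Mathlib

open Set Cardinal

noncomputable section ConnPAux

/-- The rationals as an additive subgroup of ℝ. -/
private def ratSub : AddSubgroup ℝ := AddMonoidHom.range ((Rat.castHom ℝ).toAddMonoidHom)

private abbrev QR := ℝ ⧸ ratSub

private lemma mk_ratSub_le : #ratSub ≤ ℵ₀ := by
  have : #ratSub ≤ #ℚ := by
    refine Cardinal.mk_le_of_surjective (f := fun q : ℚ => ⟨(q : ℝ), ⟨q, rfl⟩⟩) ?_
    rintro ⟨x, q, rfl⟩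
    exact ⟨q, rfl⟩
  exact this.trans Cardinal.mk_le_aleph0

private lemma continuum_le_mk_QR : 𝔠 ≤ #QR := by
  have hequiv := AddSubgroup.addGroupEquivQuotientProdAddSubgroup (s := ratSub)
  have h1 : (𝔠 : Cardinal) = #QR * #ratSub := by
    rw [← Cardinal.mk_real, Cardinal.mk_congr hequiv, Cardinal.mk_prod,
      Cardinal.lift_id, Cardinal.lift_id]
  have h2 : #QR * #ratSub ≤ max (max #QR #ratSub) ℵ₀ := Cardinal.mul_le_max _ _
  have h3 : (𝔠 : Cardinal) ≤ max (max #QR ℵ₀) ℵ₀ := by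
    refine (h1.le.trans h2).trans ?_
    exact max_le_max (max_le_max le_rfl mk_ratSub_le) le_rfl
  rcases le_or_gt #QR ℵ₀ with h | h
  · exfalso
    have : (𝔠 : Cardinal) ≤ ℵ₀ := by simpa [max_eq_right h, max_self] using h3
    exact absurd this (not_le.mpr Cardinal.aleph0_lt_continuum)
  · simpa [max_eq_left h.le, max_eq_left (h.le.trans le_rfl)] using h3

private lemma exists_hsur : ∃ h : QR → Set.Ico (0:ℝ) 1, Function.Surjective h := by
  have hle : #(Set.Ico (0:ℝ) 1) ≤ #QR :=
    le_trans (Cardinal.mk_le_mk_of_subset (subset_univ _)|>.trans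
      (by rw [Cardinal.mk_univ, Cardinal.mk_real])) continuum_le_mk_QR
  obtain ⟨e⟩ := Cardinal.le_def _ _ |>.mp hle
  exact ⟨Function.invFun e, Function.invFun_surjective e.injective⟩

/-- A surjection from the quotient onto `Ico 0 1`. -/
private def hsur : QR → Set.Ico (0:ℝ) 1 := exists_hsur.choose

private lemma hsur_surj : Function.Surjective hsur := exists_hsur.choose_spec

/-- Density of each coset in every open interval. -/
private lemma coset_dense (q : QR) {a b : ℝ} (hab : a < b) :
    ∃ x : ℝ, a < x ∧ x < b ∧ (QuotientAddGroup.mk x : QR) = q := by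
  obtain ⟨r, hr⟩ : ∃ r : ℝ, (QuotientAddGroup.mk r : QR) = q := ⟨Quotient.out q, Quotient.out_eq q⟩
  have hdense : Dense (Set.range (fun s : ℚ => r + (s : ℝ))) := by
    have : (Set.range (fun s : ℚ => r + (s : ℝ))) = (fun x => r + x) '' Set.range ((↑) : ℚ → ℝ) := by
      ext x
      simp only [Set.mem_image, Set.mem_range]
      constructor
      · rintro ⟨y, hy⟩; exact ⟨(y:ℝ), ⟨y, rfl⟩, hy⟩
      · rintro ⟨z, ⟨y, rfl⟩, hy⟩; exact ⟨y, hy⟩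
    rw [this]
    exact (Homeomorph.addLeft r).isDenseEmbedding.dense_image.mpr Rat.denseRange_cast
  obtain ⟨x, ⟨s, rfl⟩, hx⟩ := hdense.exists_mem_open isOpen_Ioo (nonempty_Ioo.mpr hab)
  refine ⟨r + (s : ℝ), hx.1, hx.2, ?_⟩
  rw [← hr]
  have : (QuotientAddGroup.mk ((s : ℝ)) : QR) = 0 :=
    (QuotientAddGroup.eq_zero_iff _).mpr ⟨s, rfl⟩
  calc (QuotientAddGroup.mk (r + (s:ℝ)) : QR)
      = QuotientAddGroup.mk r + QuotientAddGroup.mk ((s:ℝ)) := rfl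
    _ = QuotientAddGroup.mk r := by rw [this, add_zero]

/-- The function. -/
private def F : Set.Icc (0:ℝ) 1 → Set.Icc (0:ℝ) 1 :=
  fun x => ⟨(hsur (QuotientAddGroup.mk x.1)).1,
    Ico_subset_Icc_self (hsur (QuotientAddGroup.mk x.1)).2⟩

/-- Target set: the points of `Icc 0 1` with value `< 1`. -/
private def T : Set (Set.Icc (0:ℝ) 1) := {x | x.1 < 1}

private lemma val_image_T : Subtype.val '' T = Set.Ico (0:ℝ) 1 := by
  ext x
  constructor
  · rintro ⟨⟨y, hy⟩, hyT, rfl⟩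
    exact ⟨hy.1, hyT⟩
  · rintro ⟨h0, h1⟩
    exact ⟨⟨x, h0, h1.le⟩, h1, rfl⟩

private lemma image_eq_T {A : Set (Set.Icc (0:ℝ) 1)} (hA : IsConnected A)
    (hnt : ∃ u ∈ A, ∃ v ∈ A, u ≠ v) : F '' A = T := by
  obtain ⟨u, hu, v, hv, huv⟩ := hnt
  apply Set.Subset.antisymm
  · rintro _ ⟨x, -, rfl⟩
    exact (hsur (QuotientAddGroup.mk x.1)).2.2
  · intro y hy
    -- y.1 ∈ Ico 0 1
    obtain ⟨q, hq⟩ := hsur_surj ⟨y.1, y.2.1, hy⟩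
    -- val '' A is connected in ℝ, hence ordConnected
    have hB : IsConnected (Subtype.val '' A) :=
      hA.image _ continuous_subtype_val.continuousOn
    have hord : (Subtype.val '' A).OrdConnected := hB.isPreconnected.ordConnected
    have hne : u.1 ≠ v.1 := fun h => huv (Subtype.ext h)
    rcases hne.lt_or_gt with hlt | hlt
    · obtain ⟨x, hx1, hx2, hxq⟩ := coset_dense q hlt
      have hxB : x ∈ Subtype.val '' A :=
        hord.out ⟨u, hu, rfl⟩ ⟨v, hv, rfl⟩ ⟨hx1.le, hx2.le⟩
      obtain ⟨w, hw, rfl⟩ := hxB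
      refine ⟨w, hw, ?_⟩
      apply Subtype.ext
      show (hsur (QuotientAddGroup.mk w.1)).1 = y.1
      rw [hxq, hq]
    · obtain ⟨x, hx1, hx2, hxq⟩ := coset_dense q hlt
      have hxB : x ∈ Subtype.val '' A :=
        hord.out ⟨v, hv, rfl⟩ ⟨u, hu, rfl⟩ ⟨hx1.le, hx2.le⟩
      obtain ⟨w, hw, rfl⟩ := hxB
      refine ⟨w, hw, ?_⟩
      apply Subtype.ext
      show (hsur (QuotientAddGroup.mk w.1)).1 = y.1
      rw [hxq, hq]

private lemma T_connected : IsConnected T := by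
  constructor
  · exact ⟨⟨0, le_refl (0:ℝ), zero_le_one⟩, by show (0:ℝ) < 1; norm_num⟩
  · rw [← Topology.IsInducing.subtypeVal.isPreconnected_image, val_image_T]
    exact isPreconnected_Ico

end ConnPAux

theorem exists_connP_not_continuumP :
    ∃ f : Set.Icc (0:ℝ) 1 → Set.Icc (0:ℝ) 1,
      (∀ A : Set (Set.Icc (0:ℝ) 1), IsConnected A → IsConnected (f '' A)) ∧
      ¬ ∀ K : Set (Set.Icc (0:ℝ) 1), IsCompact K → IsConnected K →
          IsCompact (f '' K) ∧ IsConnected (f '' K) := by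
  refine ⟨F, ?_, ?_⟩
  · intro A hA
    by_cases hnt : ∃ u ∈ A, ∃ v ∈ A, u ≠ v
    · rw [image_eq_T hA hnt]
      exact T_connected
    · push_neg at hnt
      obtain ⟨a, ha⟩ := hA.nonempty
      have : A = {a} := by
        apply Set.Subset.antisymm
        · intro x hx; exact hnt x hx a ha
        · intro x hx; rw [Set.mem_singleton_iff.mp hx]; exact ha
      rw [this, Set.image_singleton]
      exact isConnected_singleton
  · intro hall
    have hK : IsCompact (Set.univ : Set (Set.Icc (0:ℝ) 1)) := isCompact_univ
    have hC : IsConnected (Set.univ : Set (Set.Icc (0:ℝ) 1)) := by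
      constructor
      · exact ⟨⟨0, le_refl (0:ℝ), zero_le_one⟩, mem_univ _⟩
      · rw [← Topology.IsInducing.subtypeVal.isPreconnected_image, Set.image_univ,
          Subtype.range_val]
        exact isPreconnected_Icc
    obtain ⟨hcomp, -⟩ := hall _ hK hC
    have hnt : ∃ u ∈ (Set.univ : Set (Set.Icc (0:ℝ) 1)),
        ∃ v ∈ (Set.univ : Set (Set.Icc (0:ℝ) 1)), u ≠ v := by
      refine ⟨⟨0, le_refl (0:ℝ), zero_le_one⟩, mem_univ _,
        ⟨1, zero_le_one, le_refl (1:ℝ)⟩, mem_univ _, ?_⟩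
      intro h
      have := congrArg Subtype.val h
      norm_num at this
    rw [image_eq_T hC hnt] at hcomp
    have hIco : IsCompact (Set.Ico (0:ℝ) 1) := by
      rw [← val_image_T]
      exact hcomp.image continuous_subtype_val
    have hclosed : IsClosed (Set.Ico (0:ℝ) 1) := hIco.isClosed
    have h1 : (1:ℝ) ∈ closure (Set.Ico (0:ℝ) 1) := by
      rw [closure_Ico (by norm_num : (0:ℝ) ≠ 1)]
      exact ⟨zero_le_one, le_refl 1⟩
    rw [hclosed.closure_eq] at h1
    exact absurd h1.2 (lt_irrefl 1)
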